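/- Let n ≥ 1 and let Ω ⊆ EuclideanSpace ℝ (Fin n) be a bounded set that is star-shaped with respect to every point of Metric.ball 0 ρ (ρ > 0) and contained in Metric.ball 0 R. Let x and y be points of the frontier of Ω with ‖y‖ ≤ ‖x‖, let γ := Real.arcsin (ρ / ‖x‖), and let α := Real.arccos (⟪x, y⟫ / (‖x‖ * ‖y‖)) be the angle between x and y. If α ≤ π/2 - γ, then ‖y‖ ≥ (Real.sin γ / Real.sin (γ + α)) * ‖x‖. -/

import Mathlib

open scoped RealInnerProductSpace

set_option maxHeartbeats 1000000 in
/-- Pure-real arithmetic core of the geometric lemma. -/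
lemma geometric_auxiliary_arith (ρ s r q : ℝ) (hρ : 0 < ρ) (hρs : ρ ≤ s) (hρr : ρ ≤ r)
    (hq : ρ / s ≤ q) (hq1 : q ≤ 1)
    (hK : ∀ t : ℝ, 0 ≤ t → t < 1 → ((1 - t) * ρ)^2 ≤ r^2 - 2*t*(r*q*s) + t^2*s^2) :
    ρ * s ≤ ρ * (r * q) + Real.sqrt (s^2 - ρ^2) * Real.sqrt (r^2 - (r*q)^2) := by
  have hs : 0 < s := lt_of_lt_of_le hρ hρs
  have hr : 0 < r := lt_of_lt_of_le hρ hρr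
  have hqpos : 0 < q := lt_of_lt_of_le (by positivity) hq
  set c := r * q with hc_def
  set w := Real.sqrt (s^2 - ρ^2) with hw_def
  set d := Real.sqrt (r^2 - c^2) with hd_def
  have hs2 : 0 ≤ s^2 - ρ^2 := by nlinarith
  have hcge : ρ^2 ≤ c * s := by
    have h9 : ρ * (ρ / s) ≤ r * q := mul_le_mul hρr hq (by positivity) (le_of_lt hr)
    have h10 : ρ * (ρ / s) * s = ρ^2 := by field_simp
    have h11 := mul_le_mul_of_nonneg_right h9 (le_of_lt hs)
    rw [hc_def]; linarith
  have hc2le : c^2 ≤ r^2 := by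
    have : q^2 ≤ 1 := by nlinarith
    rw [hc_def]; nlinarith
  have hw2 : w^2 = s^2 - ρ^2 := Real.sq_sqrt hs2
  have hd2 : d^2 = r^2 - c^2 := Real.sq_sqrt (by linarith)
  have hwnn : 0 ≤ w := Real.sqrt_nonneg _
  have hdnn : 0 ≤ d := Real.sqrt_nonneg _
  rcases le_or_gt s c with hcs | hcs
  · nlinarith
  · have hρlts : ρ < s := by nlinarith
    set A := s^2 - ρ^2 with hA_def
    have hApos : 0 < A := by nlinarith
    set u := c * s - ρ^2 with hu_def
    have hunn : 0 ≤ u := by rw [hu_def]; linarith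
    have ht0 : 0 ≤ u / A := by positivity
    have ht1 : u / A < 1 := by
      rw [div_lt_one hApos, hu_def, hA_def]
      nlinarith
    have hKsq := hK (u / A) ht0 ht1
    have hAne : A ≠ 0 := ne_of_gt hApos
    have hu2 : u^2 ≤ A * (r^2 - ρ^2) := by
      have h6 : ((A - u) * ρ)^2 ≤ A^2 * r^2 - 2*u*(c*s)*A + u^2 * s^2 := by
        have h12 : ((1 - u/A) * ρ)^2 * A^2 ≤ (r^2 - 2*(u/A)*(r*q*s) + (u/A)^2*s^2) * A^2 := by
          apply mul_le_mul_of_nonneg_right hKsq (sq_nonneg A)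
        have h13 : ((1 - u/A) * ρ)^2 * A^2 = ((A - u) * ρ)^2 := by
          field_simp
        have h14 : (r^2 - 2*(u/A)*(r*q*s) + (u/A)^2*s^2) * A^2
            = A^2 * r^2 - 2*u*(c*s)*A + u^2 * s^2 := by
          rw [hc_def]; field_simp
        rw [h13, h14] at h12
        exact h12
      have h7 : A * (A*(r^2-ρ^2) - u^2) = A^2*r^2 - 2*u*(c*s)*A + u^2*s^2 - ((A-u)*ρ)^2 := by
        rw [hu_def, hA_def]; ring
      have h16 : 0 ≤ A * (A*(r^2-ρ^2) - u^2) := by rw [h7]; linarith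
      have h17 : 0 ≤ A*(r^2-ρ^2) - u^2 := nonneg_of_mul_nonneg_right h16 hApos
      linarith
    have hsq : (ρ * (s - c))^2 ≤ (w * d)^2 := by
      have h15 : (w*d)^2 = A * (r^2 - c^2) := by rw [mul_pow, hw2, hd2, hA_def]
      rw [h15]
      have hid : A*(r^2-c^2) - (ρ*(s-c))^2 = A*(r^2-ρ^2) - u^2 := by
        rw [hu_def, hA_def]; ring
      linarith
    have hfin : ρ * (s - c) ≤ w * d := by
      have h8 : ρ * (s - c) = Real.sqrt ((ρ*(s-c))^2) := by
        rw [Real.sqrt_sq (by nlinarith)]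
      rw [h8]
      calc Real.sqrt ((ρ*(s-c))^2) ≤ Real.sqrt ((w*d)^2) := Real.sqrt_le_sqrt hsq
      _ = w * d := Real.sqrt_sq (by positivity)
    linarith

set_option maxHeartbeats 1600000 in
theorem geometric_auxiliary_lower_bound
    (n : ℕ) (hn : 1 ≤ n) (Ω : Set (EuclideanSpace ℝ (Fin n)))
    (hbdd : Bornology.IsBounded Ω)
    (R ρ : ℝ) (hρ : 0 < ρ)
    (hΩR : Ω ⊆ Metric.ball (0 : EuclideanSpace ℝ (Fin n)) R)
    (hstar : ∀ z ∈ Metric.ball (0 : EuclideanSpace ℝ (Fin n)) ρ, StarConvex ℝ z Ω)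
    (x y : EuclideanSpace ℝ (Fin n)) (hx : x ∈ frontier Ω) (hy : y ∈ frontier Ω)
    (hρx : ρ ≤ ‖x‖) (hyx : ‖y‖ ≤ ‖x‖)
    (hα : Real.arccos (⟪x, y⟫ / (‖x‖ * ‖y‖)) ≤ Real.pi / 2 - Real.arcsin (ρ / ‖x‖)) :
    (Real.sin (Real.arcsin (ρ / ‖x‖)) /
        Real.sin (Real.arcsin (ρ / ‖x‖) + Real.arccos (⟪x, y⟫ / (‖x‖ * ‖y‖)))) * ‖x‖
      ≤ ‖y‖ := by
  have hs : (0:ℝ) < ‖x‖ := lt_of_lt_of_le hρ hρx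
  set s := ‖x‖ with hs_def
  set r := ‖y‖ with hr_def
  -- Step 1: the cone condition
  have key : ∀ t : ℝ, 0 ≤ t → t < 1 → (1 - t) * ρ ≤ ‖y - t • x‖ := by
    intro t ht0 ht1
    by_contra hcon
    push_neg at hcon
    have h1t : (0:ℝ) < 1 - t := by linarith
    have hyint : y ∈ interior Ω := by
      rw [mem_interior]
      refine ⟨Metric.ball (t • x) ((1 - t) * ρ), ?_, Metric.isOpen_ball, ?_⟩
      · intro p hp
        rw [Metric.mem_ball, dist_eq_norm] at hp
        set ε := (1 - t) * ρ - ‖p - t • x‖ with hε_def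
        have hεpos : 0 < ε := by linarith
        have ht1' : (0:ℝ) < t + 1 := by linarith
        obtain ⟨x', hx'Ω, hx'd⟩ := Metric.mem_closure_iff.1 (frontier_subset_closure hx)
          (ε / (t + 1)) (by positivity)
        set z := (1 - t)⁻¹ • (p - t • x') with hz_def
        have hzρ : ‖z‖ < ρ := by
          have hrw : p - t • x' = (p - t • x) + t • (x - x') := by
            rw [smul_sub]; abel
          have h1 : ‖p - t • x'‖ ≤ ‖p - t • x‖ + t * ‖x - x'‖ := by
            rw [hrw]
            refine le_trans (norm_add_le _ _) ?_
            rw [norm_smul, Real.norm_eq_abs, abs_of_nonneg ht0]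
          have h2 : t * ‖x - x'‖ < ε := by
            have hd : ‖x - x'‖ = dist x x' := by rw [dist_eq_norm]
            have h3 : t * ‖x - x'‖ ≤ t * (ε / (t + 1)) := by
              apply mul_le_mul_of_nonneg_left _ ht0
              rw [hd]; exact le_of_lt hx'd
            have h4 : t * (ε / (t + 1)) < ε := by
              rw [mul_div_assoc', div_lt_iff₀ ht1']
              nlinarith
            linarith
          have h5 : ‖p - t • x'‖ < (1 - t) * ρ := by
            have := hε_def
            linarith
          rw [hz_def, norm_smul, Real.norm_eq_abs, abs_of_pos (inv_pos.2 h1t)]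
          rw [inv_mul_lt_iff₀ h1t]
          linarith
        have hzball : z ∈ Metric.ball (0 : EuclideanSpace ℝ (Fin n)) ρ := by
          rw [Metric.mem_ball, dist_zero_right]; exact hzρ
        have hmem := hstar z hzball hx'Ω (le_of_lt h1t) ht0 (by ring)
        have heq : (1 - t) • z + t • x' = p := by
          rw [hz_def, smul_inv_smul₀ (ne_of_gt h1t)]
          abel
        rwa [heq] at hmem
      · rw [Metric.mem_ball, dist_eq_norm]; exact hcon
    exact hy.2 hyint
  -- Step 2: algebraic consequences
  have hr0 : ρ ≤ r := by
    have := key 0 le_rfl one_pos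
    simpa using this
  have hr : (0:ℝ) < r := lt_of_lt_of_le hρ hr0
  set q := ⟪x, y⟫ / (s * r) with hq_def
  have hq_abs : |q| ≤ 1 := by
    rw [hq_def]
    exact abs_real_inner_div_norm_mul_norm_le_one x y
  have hq_lb : -1 ≤ q := (abs_le.1 hq_abs).1
  have hq_ub : q ≤ 1 := (abs_le.1 hq_abs).2
  have hip : ⟪x, y⟫ = q * s * r := by
    rw [hq_def]; field_simp
  set γ := Real.arcsin (ρ / s) with hγ_def
  set α := Real.arccos q with hα_def
  have hρs1 : ρ / s ≤ 1 := by rw [div_le_one hs]; exact hρx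
  have hρs0 : 0 < ρ / s := by positivity
  have hγpos : 0 < γ := Real.arcsin_pos.2 hρs0
  have hγle : γ ≤ Real.pi / 2 := Real.arcsin_le_pi_div_two _
  have hαnn : 0 ≤ α := Real.arccos_nonneg _
  have hsinγ : Real.sin γ = ρ / s := Real.sin_arcsin (by linarith) hρs1
  have hcosγ : Real.cos γ = Real.sqrt (1 - (ρ/s)^2) := Real.cos_arcsin _
  have hcosα : Real.cos α = q := Real.cos_arccos hq_lb hq_ub
  have hsinα : Real.sin α = Real.sqrt (1 - q^2) := Real.sin_arccos _
  -- angle condition gives cos α ≥ ρ/s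
  have hqge : ρ / s ≤ q := by
    have h1 : Real.cos (Real.pi / 2 - γ) ≤ Real.cos α := by
      apply Real.cos_le_cos_of_nonneg_of_le_pi hαnn
      · linarith [Real.pi_pos]
      · exact hα
    rwa [Real.cos_pi_div_two_sub, hsinγ, hcosα] at h1
  -- the constraint in algebraic form
  have hK : ∀ t : ℝ, 0 ≤ t → t < 1 → ((1 - t) * ρ)^2 ≤ r^2 - 2*t*(r*q*s) + t^2*s^2 := by
    intro t ht0 ht1
    have hKt := key t ht0 ht1
    have hKsq : ((1 - t) * ρ)^2 ≤ ‖y - t • x‖^2 := by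
      exact pow_le_pow_left₀ (mul_nonneg (by linarith) (le_of_lt hρ)) hKt 2
    have hexp : ‖y - t • x‖^2 = r^2 - 2*t*(r*q*s) + t^2 * s^2 := by
      rw [norm_sub_sq_real, real_inner_smul_right, real_inner_comm, hip, norm_smul,
        Real.norm_eq_abs, mul_pow, sq_abs]
      ring
    rwa [hexp] at hKsq
  have hmain := geometric_auxiliary_arith ρ s r q hρ hρx hr0 hqge hq_ub hK
  -- Step 3: convert to trig form
  have hs2 : 0 ≤ s^2 - ρ^2 := by nlinarith
  have hq2 : q^2 ≤ 1 := by nlinarith [hq_lb, hq_ub]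
  have hr2 : 0 ≤ r^2 - (r*q)^2 := by
    nlinarith [mul_le_mul_of_nonneg_left hq2 (sq_nonneg r)]
  have hsumle : γ + α ≤ Real.pi / 2 := by linarith
  have hsinsum_pos : 0 < Real.sin (γ + α) := by
    apply Real.sin_pos_of_pos_of_lt_pi
    · linarith
    · linarith [Real.pi_pos]
  have hsqγ : Real.sqrt (1 - (ρ/s)^2) = Real.sqrt (s^2 - ρ^2) / s := by
    rw [show (1:ℝ) - (ρ/s)^2 = (s^2 - ρ^2)/s^2 by field_simp,
      Real.sqrt_div hs2, Real.sqrt_sq (le_of_lt hs)]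
  have hsqα : Real.sqrt (1 - q^2) = Real.sqrt (r^2 - (r*q)^2) / r := by
    rw [show (1:ℝ) - q^2 = (r^2 - (r*q)^2)/r^2 by field_simp,
      Real.sqrt_div hr2, Real.sqrt_sq (le_of_lt hr)]
  have hsum : Real.sin (γ + α)
      = (ρ/s)*q + (Real.sqrt (s^2 - ρ^2) / s)*(Real.sqrt (r^2 - (r*q)^2) / r) := by
    rw [Real.sin_add, hsinγ, hcosγ, hcosα, hsinα, hsqγ, hsqα]
  rw [div_mul_eq_mul_div, div_le_iff₀ hsinsum_pos, hsinγ, hsum]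
  have hre : r * (ρ/s*q + Real.sqrt (s^2-ρ^2)/s*(Real.sqrt (r^2-(r*q)^2)/r))
      = (ρ*(r*q) + Real.sqrt (s^2-ρ^2) * Real.sqrt (r^2-(r*q)^2))/s := by
    field_simp
  rw [hre]
  rw [show ρ / s * s = ρ by field_simp, le_div_iff₀ hs]
  linarith
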